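/- Let 0 < η < 1, let λ ≤ R / √d, and let (θ_t) be the iterates of the clipped Newton method: θ_{t+1} = θ_t − η · V_t · clip(Σ_t⁻¹ V_tᵀ ∇L(θ_t), λ), where V_t, Σ_t give an orthogonal eigendecomposition of ∇²L(θ_t). If at some step T one has L(θ_T) − min L ≤ μ λ² / 8, then for all t ≥ T: (1) no clipping occurs, i.e. θ_{t+1} = θ_t − η (∇²L(θ_t))⁻¹ ∇L(θ_t); and (2) L(θ_t) − min L ≤ (1 − η(1 − η))^{t − T} · (L(θ_T) − min L) (Lemma 11, Convergence Lemma). -/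

import Mathlib

open Matrix Filter
open scoped RealInnerProductSpace

/-- Quadratic form of a matrix viewed as an operator on Euclidean space. -/
noncomputable def hessQF {d : ℕ} (A : Matrix (Fin d) (Fin d) ℝ)
    (v : EuclideanSpace ℝ (Fin d)) : ℝ :=
  ⟪v, Matrix.toEuclideanLin A v⟫

/-- Coordinatewise clipping to the interval [-λ, λ]. -/
def clipR (lam x : ℝ) : ℝ := max (min x lam) (-lam)

section Aux

lemma taylor_aux (f f1 f2 : ℝ → ℝ) (hf : ∀ s, HasDerivAt f (f1 s) s)
    (hf1 : ∀ s, HasDerivAt f1 (f2 s) s) (c : ℝ)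
    (hc : ∀ s ∈ Set.Icc (0:ℝ) 1, f2 s ≤ c) :
    f 1 ≤ f 0 + f1 0 + c / 2 := by
  set h : ℝ → ℝ := fun s => f 0 + s * f1 0 + c * s ^ 2 / 2 - f s with hh
  set h1 : ℝ → ℝ := fun s => f1 0 + c * s - f1 s with hh1
  have hd : ∀ s, HasDerivAt h (h1 s) s := by
    intro s
    have : HasDerivAt (fun s : ℝ => f 0 + s * f1 0 + c * s ^ 2 / 2) (f1 0 + c * s) s := by
      have h1' : HasDerivAt (fun s : ℝ => s * f1 0) (f1 0) s := by
        simpa using (hasDerivAt_id s).mul_const (f1 0)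
      have h2' : HasDerivAt (fun s : ℝ => c * s ^ 2 / 2) (c * s) s := by
        have := ((hasDerivAt_pow 2 s).const_mul c).div_const 2
        simpa [mul_comm, mul_assoc, mul_div_assoc] using this
      exact (h1'.const_add (f 0)).add h2'
    exact this.sub (hf s)
  have hd1 : ∀ s, HasDerivAt h1 (c - f2 s) s := by
    intro s
    have : HasDerivAt (fun s : ℝ => f1 0 + c * s) c s := by
      simpa using ((hasDerivAt_id s).const_mul c).const_add (f1 0)
    exact this.sub (hf1 s)
  have hmono1 : MonotoneOn h1 (Set.Icc (0:ℝ) 1) := by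
    apply monotoneOn_of_deriv_nonneg (convex_Icc 0 1)
    · exact (fun s _ => (hd1 s).continuousAt.continuousWithinAt)
    · exact fun s _ => ((hd1 s).differentiableAt).differentiableWithinAt
    · intro s hs
      rw [interior_Icc] at hs
      rw [(hd1 s).deriv]
      have := hc s ⟨hs.1.le, hs.2.le⟩
      linarith
  have h1nn : ∀ s ∈ Set.Icc (0:ℝ) 1, 0 ≤ h1 s := by
    intro s hs
    have h10 : h1 0 = 0 := by simp [hh1]
    have := hmono1 (Set.left_mem_Icc.2 zero_le_one) hs hs.1
    rw [h10] at this; exact this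
  have hmono : MonotoneOn h (Set.Icc (0:ℝ) 1) := by
    apply monotoneOn_of_deriv_nonneg (convex_Icc 0 1)
    · exact (fun s _ => (hd s).continuousAt.continuousWithinAt)
    · exact fun s _ => ((hd s).differentiableAt).differentiableWithinAt
    · intro s hs
      rw [interior_Icc] at hs
      rw [(hd s).deriv]
      exact h1nn s ⟨hs.1.le, hs.2.le⟩
  have := hmono (Set.left_mem_Icc.2 zero_le_one) (Set.right_mem_Icc.2 zero_le_one) zero_le_one
  simp only [hh] at this
  nlinarith [this]

variable {d : ℕ}

lemma inner_symm_eq_dot (a b : Fin d → ℝ) :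
    ⟪(WithLp.equiv 2 (Fin d → ℝ)).symm a, (WithLp.equiv 2 (Fin d → ℝ)).symm b⟫ = a ⬝ᵥ b := by
  simp [dotProduct, PiLp.inner_apply, mul_comm]

lemma hessQF_eq_dot (A : Matrix (Fin d) (Fin d) ℝ) (v : EuclideanSpace ℝ (Fin d)) :
    hessQF A v = (WithLp.equiv 2 (Fin d → ℝ)) v ⬝ᵥ (A *ᵥ (WithLp.equiv 2 (Fin d → ℝ)) v) := by
  simp [hessQF, dotProduct, Matrix.toEuclideanLin_apply, PiLp.inner_apply, mul_comm]

lemma hessQF_nonneg {A : Matrix (Fin d) (Fin d) ℝ} (hpd : A.PosDef)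
    (v : EuclideanSpace ℝ (Fin d)) : 0 ≤ hessQF A v := by
  have := hpd.posSemidef.dotProduct_mulVec_nonneg ((WithLp.equiv 2 (Fin d → ℝ)) v)
  rw [hessQF_eq_dot]
  simpa [dotProduct] using this

lemma hessQF_smul (A : Matrix (Fin d) (Fin d) ℝ) (c : ℝ) (v : EuclideanSpace ℝ (Fin d)) :
    hessQF A (c • v) = c ^ 2 * hessQF A v := by
  simp only [hessQF, _root_.map_smul, real_inner_smul_left, real_inner_smul_right]
  ring

lemma bilin_symm {A : Matrix (Fin d) (Fin d) ℝ} (hpd : A.PosDef)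
    (u w : EuclideanSpace ℝ (Fin d)) :
    ⟪u, Matrix.toEuclideanLin A w⟫ = ⟪Matrix.toEuclideanLin A u, w⟫ := by
  have hsymm : Aᵀ = A := hpd.isHermitian
  have h1 : ∀ a b : Fin d → ℝ, a ⬝ᵥ (A *ᵥ b) = (A *ᵥ a) ⬝ᵥ b := by
    intro a b
    rw [Matrix.dotProduct_mulVec, ← Matrix.vecMul_transpose, hsymm]
  have := h1 ((WithLp.equiv 2 (Fin d → ℝ)) u) ((WithLp.equiv 2 (Fin d → ℝ)) w)
  simpa [dotProduct, Matrix.toEuclideanLin_apply, PiLp.inner_apply, mul_comm] using this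

lemma eig_inv (A V : Matrix (Fin d) (Fin d) ℝ) (σ : Fin d → ℝ)
    (hV : Vᵀ * V = 1) (hA : Vᵀ * A * V = Matrix.diagonal σ) (hσ : ∀ j, σ j ≠ 0) :
    A⁻¹ = V * Matrix.diagonal (fun j => (σ j)⁻¹) * Vᵀ := by
  have hV' : V * Vᵀ = 1 := mul_eq_one_comm.mp hV
  have hAeq : A = V * Matrix.diagonal σ * Vᵀ := by
    have h2 : V * (Vᵀ * A * V) * Vᵀ = V * Matrix.diagonal σ * Vᵀ := by rw [hA]
    have h3 : V * (Vᵀ * A * V) * Vᵀ = A := by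
      rw [show V * (Vᵀ * A * V) * Vᵀ = (V * Vᵀ) * A * (V * Vᵀ) by
        simp only [Matrix.mul_assoc], hV', Matrix.one_mul, Matrix.mul_one]
    rw [← h3, h2]
  apply Matrix.inv_eq_right_inv
  rw [hAeq]
  calc V * Matrix.diagonal σ * Vᵀ * (V * Matrix.diagonal (fun j => (σ j)⁻¹) * Vᵀ)
      = V * (Matrix.diagonal σ * ((Vᵀ * V) * Matrix.diagonal (fun j => (σ j)⁻¹))) * Vᵀ := by
        simp only [Matrix.mul_assoc]
    _ = V * (Matrix.diagonal σ * Matrix.diagonal (fun j => (σ j)⁻¹)) * Vᵀ := by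
        rw [hV, Matrix.one_mul]
    _ = 1 := by
        rw [Matrix.diagonal_mul_diagonal]
        have : (fun j => σ j * (σ j)⁻¹) = fun _ => (1:ℝ) := by
          funext j; exact mul_inv_cancel₀ (hσ j)
        rw [this, Matrix.diagonal_one, Matrix.mul_one, hV']

lemma update_vec (V : Matrix (Fin d) (Fin d) ℝ) (σ : Fin d → ℝ) (g : Fin d → ℝ) :
    V *ᵥ (fun j => (σ j)⁻¹ * (g ᵥ* V) j)
      = (V * Matrix.diagonal (fun j => (σ j)⁻¹) * Vᵀ) *ᵥ g := by
  have h1 : (fun j => (σ j)⁻¹ * (g ᵥ* V) j)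
      = Matrix.diagonal (fun j => (σ j)⁻¹) *ᵥ (Vᵀ *ᵥ g) := by
    funext j
    rw [Matrix.mulVec_diagonal]
    congr 1
    rw [Matrix.mulVec_transpose]
  rw [h1, Matrix.mulVec_mulVec, Matrix.mulVec_mulVec, Matrix.mul_assoc]

lemma norm_orth (V : Matrix (Fin d) (Fin d) ℝ) (hV : Vᵀ * V = 1) (u : Fin d → ℝ) :
    ‖(WithLp.equiv 2 (Fin d → ℝ)).symm (V *ᵥ u)‖ = ‖(WithLp.equiv 2 (Fin d → ℝ)).symm u‖ := by
  have hdot : (V *ᵥ u) ⬝ᵥ (V *ᵥ u) = u ⬝ᵥ u := by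
    rw [Matrix.dotProduct_mulVec, Matrix.vecMul_mulVec, hV, Matrix.vecMul_one]
  have h1 := inner_symm_eq_dot (V *ᵥ u) (V *ᵥ u)
  have h2 := inner_symm_eq_dot u u
  rw [real_inner_self_eq_norm_sq] at h1
  rw [real_inner_self_eq_norm_sq] at h2
  have : ‖(WithLp.equiv 2 (Fin d → ℝ)).symm (V *ᵥ u)‖ ^ 2
      = ‖(WithLp.equiv 2 (Fin d → ℝ)).symm u‖ ^ 2 := by rw [h1, h2, hdot]
  nlinarith [norm_nonneg ((WithLp.equiv 2 (Fin d → ℝ)).symm (V *ᵥ u)),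
    norm_nonneg ((WithLp.equiv 2 (Fin d → ℝ)).symm u), this]

lemma coord_le_norm (u : Fin d → ℝ) (j : Fin d) :
    |u j| ≤ ‖(WithLp.equiv 2 (Fin d → ℝ)).symm u‖ := by
  have h2 := inner_symm_eq_dot u u
  rw [real_inner_self_eq_norm_sq] at h2
  have hsq : u j ^ 2 ≤ ‖(WithLp.equiv 2 (Fin d → ℝ)).symm u‖ ^ 2 := by
    rw [h2]
    unfold dotProduct
    have : u j * u j ≤ ∑ i, u i * u i := by
      apply Finset.single_le_sum (f := fun i => u i * u i)
        (fun i _ => mul_self_nonneg (u i)) (Finset.mem_univ j)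
    nlinarith [this]
  nlinarith [hsq, sq_abs (u j), norm_nonneg ((WithLp.equiv 2 (Fin d → ℝ)).symm u),
    abs_nonneg (u j)]

lemma toEuclideanLin_mul (A B : Matrix (Fin d) (Fin d) ℝ) (v : EuclideanSpace ℝ (Fin d)) :
    Matrix.toEuclideanLin A (Matrix.toEuclideanLin B v) = Matrix.toEuclideanLin (A * B) v := by
  simp [Matrix.toEuclideanLin_apply, Matrix.mulVec_mulVec]

lemma clipR_eq_self {lam x : ℝ} (h : |x| ≤ lam) : clipR lam x = x := by
  rcases abs_le.mp h with ⟨h1, h2⟩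
  unfold clipR
  rw [min_eq_left h2, max_eq_left h1]

lemma taylor_bound (L : EuclideanSpace ℝ (Fin d) → ℝ)
    (hLdiff : Differentiable ℝ L)
    (H : EuclideanSpace ℝ (Fin d) → Matrix (Fin d) (Fin d) ℝ)
    (hH : ∀ x, HasFDerivAt (gradient L)
      (LinearMap.toContinuousLinearMap (Matrix.toEuclideanLin (H x))) x)
    (θ δ : EuclideanSpace ℝ (Fin d)) (c1 c2 : ℝ)
    (h1 : ∀ s ∈ Set.Icc (0:ℝ) 1, c1 ≤ hessQF (H (θ + s • δ)) δ)
    (h2 : ∀ s ∈ Set.Icc (0:ℝ) 1, hessQF (H (θ + s • δ)) δ ≤ c2) :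
    L θ + ⟪gradient L θ, δ⟫ + c1 / 2 ≤ L (θ + δ) ∧
    L (θ + δ) ≤ L θ + ⟪gradient L θ, δ⟫ + c2 / 2 := by
  set f : ℝ → ℝ := fun s => L (θ + s • δ) with hf_def
  set f1 : ℝ → ℝ := fun s => ⟪gradient L (θ + s • δ), δ⟫ with hf1_def
  set f2 : ℝ → ℝ := fun s => hessQF (H (θ + s • δ)) δ with hf2_def
  have hline : ∀ s : ℝ, HasDerivAt (fun s : ℝ => θ + s • δ) δ s := by
    intro s
    simpa using ((hasDerivAt_id s).smul_const δ).const_add θ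
  have hf : ∀ s, HasDerivAt f (f1 s) s := by
    intro s
    have hg : HasGradientAt L (gradient L (θ + s • δ)) (θ + s • δ) :=
      (hLdiff _).hasGradientAt
    have := hg.hasFDerivAt.comp_hasDerivAt s (hline s)
    simpa [hf_def, hf1_def, InnerProductSpace.toDual_apply_apply, Function.comp_def] using this
  have hf1 : ∀ s, HasDerivAt f1 (f2 s) s := by
    intro s
    have hgd : HasDerivAt (fun u : ℝ => gradient L (θ + u • δ))
        (Matrix.toEuclideanLin (H (θ + s • δ)) δ) s := by
      have := (hH (θ + s • δ)).comp_hasDerivAt s (hline s)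
      simpa [Function.comp_def] using this
    have hconst : HasDerivAt (fun _ : ℝ => δ) (0 : EuclideanSpace ℝ (Fin d)) s :=
      hasDerivAt_const s δ
    have := hgd.inner ℝ hconst
    simpa [hf1_def, hf2_def, hessQF, mul_comm, real_inner_comm] using this
  have hf0 : f 0 = L θ := by simp [hf_def]
  have hf10 : f1 0 = ⟪gradient L θ, δ⟫ := by simp [hf1_def]
  have hfone : f 1 = L (θ + δ) := by simp [hf_def]
  constructor
  · have := taylor_aux (fun s => -f s) (fun s => -f1 s) (fun s => -f2 s)
      (fun s => (hf s).neg) (fun s => (hf1 s).neg) (-c1)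
      (fun s hs => neg_le_neg (h1 s hs))
    rw [hf0, hf10, hfone] at *
    linarith [this]
  · have := taylor_aux f f1 f2 hf hf1 c2 h2
    rw [hf0, hf10, hfone] at this
    linarith

end Aux
set_option maxHeartbeats 2000000

/-- Lemma 11 (Convergence Lemma): once the loss gap is below μλ²/8, clipping no longer occurs and the loss gap decays geometrically. -/
theorem stmt_16 (d : ℕ) (hd : 1 ≤ d)
    (L : EuclideanSpace ℝ (Fin d) → ℝ) (hL : ContDiff ℝ 2 L)
    (hconv : StrictConvexOn ℝ Set.univ L)
    (θs : EuclideanSpace ℝ (Fin d))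
    (hmin : ∀ θ, θ ≠ θs → L θs < L θ)
    (hgrad0 : gradient L θs = 0)
    (H : EuclideanSpace ℝ (Fin d) → Matrix (Fin d) (Fin d) ℝ)
    (hH : ∀ x, HasFDerivAt (gradient L)
      (LinearMap.toContinuousLinearMap (Matrix.toEuclideanLin (H x))) x)
    (hpd : ∀ x, (H x).PosDef)
    (μ : ℝ) (hμpos : 0 < μ)
    (hμlb : ∀ v : EuclideanSpace ℝ (Fin d), μ * ‖v‖ ^ 2 ≤ hessQF (H θs) v)
    (hμeig : ∃ v : EuclideanSpace ℝ (Fin d), v ≠ 0 ∧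
      Matrix.toEuclideanLin (H θs) v = μ • v)
    (R : ℝ) (hR : 0 < R)
    (hA2 : ∀ θ θ' : EuclideanSpace ℝ (Fin d), ‖θ - θ'‖ ≤ R →
      ∀ v, (1/2) * hessQF (H θ') v ≤ hessQF (H θ) v ∧
        hessQF (H θ) v ≤ 2 * hessQF (H θ') v)
    (η : ℝ) (hη0 : 0 < η) (hη1 : η < 1)
    (lam : ℝ) (hlam0 : 0 < lam) (hlam : lam ≤ R / Real.sqrt d)
    (θt : ℕ → EuclideanSpace ℝ (Fin d))
    (V : ℕ → Matrix (Fin d) (Fin d) ℝ)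
    (σ : ℕ → Fin d → ℝ)
    (hVorth : ∀ t, (V t)ᵀ * V t = 1)
    (hσpos : ∀ t j, 0 < σ t j)
    (hdiag : ∀ t, (V t)ᵀ * H (θt t) * V t = Matrix.diagonal (σ t))
    (hiter : ∀ t, θt (t + 1) = θt t - η • (WithLp.equiv 2 (Fin d → ℝ)).symm
      ((V t).mulVec (fun j => clipR lam ((σ t j)⁻¹ *
        Matrix.vecMul ((WithLp.equiv 2 (Fin d → ℝ)) (gradient L (θt t))) (V t) j))))
    (T : ℕ) (hT : L (θt T) - L θs ≤ μ * lam ^ 2 / 8) :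
    ∀ t, T ≤ t →
      (θt (t + 1) = θt t -
        η • Matrix.toEuclideanLin ((H (θt t))⁻¹) (gradient L (θt t))) ∧
      L (θt t) - L θs ≤ (1 - η * (1 - η)) ^ (t - T) * (L (θt T) - L θs) := by
  have hLdiff : Differentiable ℝ L := hL.differentiable two_ne_zero
  -- two-sided Taylor bounds
  have taylor : ∀ θ δ : EuclideanSpace ℝ (Fin d), ‖δ‖ ≤ R →
      (L θ + ⟪gradient L θ, δ⟫ + (1/4) * hessQF (H θ) δ ≤ L (θ + δ) ∧
       L (θ + δ) ≤ L θ + ⟪gradient L θ, δ⟫ + hessQF (H θ) δ) := by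
    intro θ δ hδR
    have hseg : ∀ s ∈ Set.Icc (0:ℝ) 1, ‖(θ + s • δ) - θ‖ ≤ R := by
      intro s hs
      have : ‖(θ + s • δ) - θ‖ = |s| * ‖δ‖ := by simp [norm_smul]
      rw [this, abs_of_nonneg hs.1]
      calc s * ‖δ‖ ≤ 1 * ‖δ‖ := mul_le_mul_of_nonneg_right hs.2 (norm_nonneg _)
        _ ≤ R := by simpa using hδR
    have := taylor_bound L hLdiff H hH θ δ ((1/2) * hessQF (H θ) δ) (2 * hessQF (H θ) δ)
      (fun s hs => (hA2 (θ + s • δ) θ (hseg s hs) δ).1)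
      (fun s hs => (hA2 (θ + s • δ) θ (hseg s hs) δ).2)
    constructor
    · have := this.1; linarith
    · have := this.2; linarith
  have hgapnn : ∀ θ, 0 ≤ L θ - L θs := by
    intro θ
    rcases eq_or_ne θ θs with h | h
    · simp [h]
    · linarith [hmin θ h]
  have hsd : (1:ℝ) ≤ Real.sqrt d := by
    rw [show (1:ℝ) = Real.sqrt 1 by simp]
    apply Real.sqrt_le_sqrt
    exact_mod_cast hd
  have hlamR : lam ≤ R := le_trans hlam (div_le_self hR.le hsd)
  -- closeness to the minimizer
  have hclose : ∀ θ : EuclideanSpace ℝ (Fin d),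
      L θ - L θs ≤ μ * lam ^ 2 / 8 → ‖θ - θs‖ ≤ R := by
    intro θ hgap
    by_contra hcon
    push_neg at hcon
    set δ : EuclideanSpace ℝ (Fin d) := θ - θs with hδ
    have hD : 0 < ‖δ‖ := lt_trans hR hcon
    set s : ℝ := R / ‖δ‖ with hs_def
    have hs0 : 0 < s := div_pos hR hD
    have hs1 : s < 1 := (div_lt_one hD).mpr hcon
    have hnorm : ‖s • δ‖ = R := by
      rw [norm_smul, Real.norm_eq_abs, abs_of_pos hs0, hs_def]
      field_simp
    have hlo := (taylor θs (s • δ) (le_of_eq hnorm)).1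
    rw [hgrad0] at hlo
    simp only [inner_zero_left, add_zero] at hlo
    have hQ : μ * R ^ 2 ≤ hessQF (H θs) (s • δ) := by
      have := hμlb (s • δ)
      rw [hnorm] at this
      exact this
    have hcvx : L (θs + s • δ) ≤ (1 - s) * L θs + s * L θ := by
      have hpt : θs + s • δ = (1 - s) • θs + s • θ := by
        rw [hδ]; module
      rw [hpt]
      exact hconv.convexOn.2 (Set.mem_univ _) (Set.mem_univ _)
        (by linarith) hs0.le (by ring)
    have hsgap : s * (L θ - L θs) ≤ L θ - L θs :=
      mul_le_of_le_one_left (hgapnn θ) hs1.le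
    have hlam2 : lam ^ 2 ≤ R ^ 2 := by nlinarith
    have hμlam2 : μ * lam ^ 2 ≤ μ * R ^ 2 := mul_le_mul_of_nonneg_left hlam2 hμpos.le
    have hμR : 0 < μ * R ^ 2 := by positivity
    nlinarith [hlo, hQ, hcvx, hsgap, hgap, hμlam2, hμR]
  -- the key one-step estimate
  have key : ∀ θ : EuclideanSpace ℝ (Fin d), L θ - L θs ≤ μ * lam ^ 2 / 8 →
      ‖Matrix.toEuclideanLin ((H θ)⁻¹) (gradient L θ)‖ ≤ lam ∧
      L (θ - η • Matrix.toEuclideanLin ((H θ)⁻¹) (gradient L θ)) - L θs ≤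
        (1 - η * (1 - η)) * (L θ - L θs) := by
    intro θ hgap
    set gv : EuclideanSpace ℝ (Fin d) := gradient L θ with hgv
    set n : EuclideanSpace ℝ (Fin d) := Matrix.toEuclideanLin ((H θ)⁻¹) gv with hn
    have hHn : Matrix.toEuclideanLin (H θ) n = gv := by
      have hdet : IsUnit (H θ).det := isUnit_iff_ne_zero.mpr (hpd θ).det_pos.ne'
      rw [hn, toEuclideanLin_mul, Matrix.mul_nonsing_inv _ hdet]
      rw [Matrix.toEuclideanLin_apply, Matrix.one_mulVec]
    set ν : ℝ := ⟪gv, n⟫ with hν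
    have hQn : hessQF (H θ) n = ν := by
      rw [hessQF, hHn, real_inner_comm]
    have hνnn : 0 ≤ ν := by rw [← hQn]; exact hessQF_nonneg (hpd θ) n
    have hθR : ‖θ - θs‖ ≤ R := hclose θ hgap
    have hQlb : ∀ v : EuclideanSpace ℝ (Fin d), μ / 2 * ‖v‖ ^ 2 ≤ hessQF (H θ) v := by
      intro v
      have h1 := (hA2 θ θs hθR v).1
      have h2 := hμlb v
      linarith
    have hgap0 : 0 ≤ L θ - L θs := hgapnn θ
    -- gap ≤ ν
    have hgapν : L θ - L θs ≤ ν := by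
      set w : EuclideanSpace ℝ (Fin d) := θs - θ with hw
      have hwR : ‖w‖ ≤ R := by rw [hw, norm_sub_rev]; exact hθR
      have hlo := (taylor θ w hwR).1
      have hθw : θ + w = θs := by rw [hw]; abel
      rw [hθw] at hlo
      have e1 : ⟪w, Matrix.toEuclideanLin (H θ) n⟫ = ⟪gv, w⟫ := by
        rw [hHn, real_inner_comm]
      have e2 : ⟪n, Matrix.toEuclideanLin (H θ) w⟫ = ⟪gv, w⟫ := by
        rw [bilin_symm (hpd θ), hHn]
      have e3 : ⟪n, Matrix.toEuclideanLin (H θ) n⟫ = ν := hQn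
      have hexp : hessQF (H θ) (w + (2:ℝ) • n)
          = hessQF (H θ) w + 4 * ⟪gv, w⟫ + 4 * ν := by
        simp only [hessQF, map_add, _root_.map_smul, inner_add_left, inner_add_right,
          real_inner_smul_left, real_inner_smul_right]
        rw [e1, e2, e3]
        ring
      have h0 : 0 ≤ hessQF (H θ) (w + (2:ℝ) • n) := hessQF_nonneg (hpd θ) _
      linarith
    -- ν ≤ 4 gap
    have hν4 : ν ≤ 4 * (L θ - L θs) := by
      rcases le_or_gt ‖n‖ R with hnR | hnR
      · set δ : EuclideanSpace ℝ (Fin d) := (-(1/2) : ℝ) • n with hδ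
        have hδR : ‖δ‖ ≤ R := by
          have hc : ‖(-(1/2) : ℝ)‖ = 1/2 := by norm_num
          rw [hδ, norm_smul, hc]
          linarith [norm_nonneg n]
        have hup := (taylor θ δ hδR).2
        have hgδ : ⟪gv, δ⟫ = -(1/2) * ν := by
          rw [hδ, real_inner_smul_right, hν]
        have hQδ : hessQF (H θ) δ = (1/4) * ν := by
          rw [hδ, hessQF_smul, hQn]; norm_num
        have hge := hgapnn (θ + δ)
        rw [hgδ, hQδ] at hup
        linarith
      · exfalso
        have hn0 : 0 < ‖n‖ := lt_trans hR hnR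
        set t : ℝ := R / (2 * ‖n‖) with ht
        have ht0 : 0 < t := by positivity
        have ht2 : t < 1/2 := by
          rw [ht, div_lt_iff₀ (by positivity)]
          nlinarith
        set δ : EuclideanSpace ℝ (Fin d) := (-t : ℝ) • n with hδ
        have hδR : ‖δ‖ ≤ R := by
          have hc : ‖(-t : ℝ)‖ = t := by
            rw [norm_neg, Real.norm_eq_abs, abs_of_pos ht0]
          have ht' : t * ‖n‖ = R / 2 := by rw [ht]; field_simp
          rw [hδ, norm_smul, hc, ht']
          linarith
        have hup := (taylor θ δ hδR).2
        have hgδ : ⟪gv, δ⟫ = -t * ν := by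
          rw [hδ, real_inner_smul_right, hν]
        have hQδ : hessQF (H θ) δ = t ^ 2 * ν := by
          rw [hδ, hessQF_smul, hQn]; ring_nf
        have hge := hgapnn (θ + δ)
        rw [hgδ, hQδ] at hup
        -- gap ≥ t(1-t) ν ≥ (t/2) ν, ν ≥ (μ/2)‖n‖²
        have hνlb : μ / 2 * ‖n‖ ^ 2 ≤ ν := by rw [← hQn]; exact hQlb n
        have hgap_ge : t * ν - t ^ 2 * ν ≤ L θ - L θs := by linarith [hup, hge]
        have htν : (t / 2) * ν ≤ t * ν - t ^ 2 * ν := by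
          have hfac := mul_nonneg (mul_nonneg ht0.le
            (by linarith : (0:ℝ) ≤ 1/2 - t)) hνnn
          nlinarith [hfac]
        have ht' : t * ‖n‖ = R / 2 := by rw [ht]; field_simp
        have hchain : μ * R * ‖n‖ / 8 ≤ (t / 2) * ν := by
          have h1 : t / 2 * (μ / 2 * ‖n‖ ^ 2) ≤ t / 2 * ν :=
            mul_le_mul_of_nonneg_left hνlb (by positivity)
          have h2 : t / 2 * (μ / 2 * ‖n‖ ^ 2) = μ / 4 * ‖n‖ * (t * ‖n‖) := by ring
          rw [h2, ht'] at h1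
          linarith [h1]
        have hlam2 : lam ^ 2 ≤ R ^ 2 := by nlinarith [hlamR, hlam0]
        have h3 : μ * R * R / 8 < μ * R * ‖n‖ / 8 := by
          have hμR : 0 < μ * R := mul_pos hμpos hR
          nlinarith [hμR, hnR]
        have h4 : μ * lam ^ 2 / 8 ≤ μ * R * R / 8 := by
          nlinarith [mul_le_mul_of_nonneg_left hlam2 hμpos.le]
        linarith [hgap_ge, htν, hchain, hgap, h3, h4]
    -- ‖n‖ ≤ lam
    have hνlb : μ / 2 * ‖n‖ ^ 2 ≤ ν := by rw [← hQn]; exact hQlb n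
    have hnlam : ‖n‖ ≤ lam := by
      have hsq : ‖n‖ ^ 2 ≤ lam ^ 2 := by nlinarith
      nlinarith [norm_nonneg n]
    refine ⟨hnlam, ?_⟩
    -- descent step
    set δ : EuclideanSpace ℝ (Fin d) := (-η : ℝ) • n with hδ
    have hδR : ‖δ‖ ≤ R := by
      have hc : ‖(-η : ℝ)‖ = η := by
        rw [norm_neg, Real.norm_eq_abs, abs_of_pos hη0]
      rw [hδ, norm_smul, hc]
      nlinarith [norm_nonneg n, hnlam]
    have hup := (taylor θ δ hδR).2
    have hgδ : ⟪gv, δ⟫ = -η * ν := by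
      rw [hδ, real_inner_smul_right, hν]
    have hQδ : hessQF (H θ) δ = η ^ 2 * ν := by
      rw [hδ, hessQF_smul, hQn]; ring_nf
    rw [hgδ, hQδ] at hup
    have hθδ : θ + δ = θ - η • n := by rw [hδ]; module
    rw [hθδ] at hup
    have hκν := mul_le_mul_of_nonneg_left hgapν
      (mul_nonneg hη0.le (by linarith : (0:ℝ) ≤ 1 - η))
    nlinarith [hup, hκν]
  -- no clipping occurs when the gap is small
  have hnoclip : ∀ t : ℕ, L (θt t) - L θs ≤ μ * lam ^ 2 / 8 →
      θt (t + 1) = θt t - η • Matrix.toEuclideanLin ((H (θt t))⁻¹) (gradient L (θt t)) := by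
    intro t hgap
    have hkey := (key (θt t) hgap).1
    set g' : Fin d → ℝ := (WithLp.equiv 2 (Fin d → ℝ)) (gradient L (θt t)) with hg'
    set u : Fin d → ℝ := fun j => (σ t j)⁻¹ * (g' ᵥ* (V t)) j with hu
    have hinv : (H (θt t))⁻¹ = V t * Matrix.diagonal (fun j => (σ t j)⁻¹) * (V t)ᵀ :=
      eig_inv (H (θt t)) (V t) (σ t) (hVorth t) (hdiag t) (fun j => (hσpos t j).ne')
    have hVu : V t *ᵥ u = (H (θt t))⁻¹ *ᵥ g' := by
      rw [hinv, hu]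
      exact update_vec (V t) (σ t) g'
    have hn_eq : (WithLp.equiv 2 (Fin d → ℝ)).symm (V t *ᵥ u)
        = Matrix.toEuclideanLin ((H (θt t))⁻¹) (gradient L (θt t)) := by
      rw [hVu, Matrix.toEuclideanLin_apply, hg']; rfl
    have hnorm_u : ‖(WithLp.equiv 2 (Fin d → ℝ)).symm u‖ ≤ lam := by
      rw [← norm_orth (V t) (hVorth t) u, hn_eq]
      exact hkey
    have hcoord : ∀ j, |u j| ≤ lam :=
      fun j => le_trans (coord_le_norm u j) hnorm_u
    have hclipfun : (fun j => clipR lam (u j)) = u :=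
      funext fun j => clipR_eq_self (hcoord j)
    have := hiter t
    rw [show (fun j => clipR lam ((σ t j)⁻¹ *
        Matrix.vecMul ((WithLp.equiv 2 (Fin d → ℝ)) (gradient L (θt t))) (V t) j))
      = (fun j => clipR lam (u j)) from rfl, hclipfun, hn_eq] at this
    exact this
  -- geometric decay by induction
  set κ : ℝ := η * (1 - η) with hκ
  have hκ0 : 0 < κ := mul_pos hη0 (by linarith)
  have hκ1 : κ < 1 := by nlinarith
  have hfac0 : 0 < 1 - κ := by linarith
  have hfac1 : 1 - κ ≤ 1 := by linarith
  have main : ∀ k : ℕ, L (θt (T + k)) - L θs ≤ (1 - κ) ^ k * (L (θt T) - L θs) := by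
    intro k
    induction k with
    | zero => simp
    | succ k ih =>
      have hb : L (θt (T + k)) - L θs ≤ μ * lam ^ 2 / 8 := by
        have hpow : (1 - κ) ^ k ≤ 1 := pow_le_one₀ hfac0.le hfac1
        have := mul_le_of_le_one_left (hgapnn (θt T)) hpow
        linarith [ih, this, hT]
      have heq := hnoclip (T + k) hb
      have hstep := (key (θt (T + k)) hb).2
      have hrw : θt (T + (k + 1)) = θt (T + k) -
          η • Matrix.toEuclideanLin ((H (θt (T + k)))⁻¹) (gradient L (θt (T + k))) := by
        rw [show T + (k + 1) = (T + k) + 1 from rfl]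
        exact heq
      calc L (θt (T + (k + 1))) - L θs
          ≤ (1 - κ) * (L (θt (T + k)) - L θs) := by rw [hrw]; exact hstep
        _ ≤ (1 - κ) * ((1 - κ) ^ k * (L (θt T) - L θs)) :=
            mul_le_mul_of_nonneg_left ih hfac0.le
        _ = (1 - κ) ^ (k + 1) * (L (θt T) - L θs) := by ring
  intro t ht
  obtain ⟨k, rfl⟩ := Nat.exists_eq_add_of_le ht
  constructor
  · apply hnoclip
    have hpow : (1 - κ) ^ k ≤ 1 := pow_le_one₀ hfac0.le hfac1
    have := mul_le_of_le_one_left (hgapnn (θt T)) hpow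
    linarith [main k, this, hT]
  · rw [show T + k - T = k from by omega]
    exact main k
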